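/- Let E = [[2,0,1],[2,0,2],[2,0,1]] and F = [[2,1,0],[2,1,0],[2,0,1]], and let 𝒫 denote the set of all finite products T_1 T_2 ⋯ T_k with each T_i ∈ {E, F} (including the empty product, the 3×3 identity matrix). Let S be any 3×3 matrix of the form S = [[a,0,0],[a,0,0],[0,0,−b]] with real numbers a ≥ b ≥ 0. Then for all M_1, M_2 ∈ 𝒫, the scalar (1,1,1) · M_1 S M_2 · (1,1,1)ᵗ is nonnegative. -/

import Mathlib

open Matrix

/-- The matrix `E = [[2,0,1],[2,0,2],[2,0,1]]`. -/
def matE : Matrix (Fin 3) (Fin 3) ℝ := !![2, 0, 1; 2, 0, 2; 2, 0, 1]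

/-- The matrix `F = [[2,1,0],[2,1,0],[2,0,1]]`. -/
def matF : Matrix (Fin 3) (Fin 3) ℝ := !![2, 1, 0; 2, 1, 0; 2, 0, 1]

/-- `𝒫` is the set of all finite products of copies of `E` and `F` (including the empty
product, the identity matrix). -/
def prodSet : Set (Matrix (Fin 3) (Fin 3) ℝ) :=
  {M | ∃ l : List (Matrix (Fin 3) (Fin 3) ℝ), (∀ T ∈ l, T = matE ∨ T = matF) ∧ M = l.prod}

private lemma col_sum_mul (M T : Matrix (Fin 3) (Fin 3) ℝ) (j : Fin 3) :
    ∑ i, (M * T) i j = ∑ k, (∑ i, M i k) * T k j := by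
  simp only [Matrix.mul_apply]
  rw [Finset.sum_comm]
  simp [Finset.sum_mul]

private lemma row_sum_mul (T M : Matrix (Fin 3) (Fin 3) ℝ) (i : Fin 3) :
    ∑ j, (T * M) i j = ∑ k, T i k * (∑ j, M k j) := by
  simp only [Matrix.mul_apply]
  rw [Finset.sum_comm]
  simp [Finset.mul_sum]

private lemma colE (M : Matrix (Fin 3) (Fin 3) ℝ) :
    (∑ i, (M * matE) i 0 = 2 * ((∑ i, M i 0) + (∑ i, M i 1) + (∑ i, M i 2))) ∧
    (∑ i, (M * matE) i 1 = 0) ∧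
    (∑ i, (M * matE) i 2 = (∑ i, M i 0) + 2 * (∑ i, M i 1) + (∑ i, M i 2)) := by
  refine ⟨?_, ?_, ?_⟩ <;>
    · rw [col_sum_mul, Fin.sum_univ_three]
      norm_num [matE, Matrix.vecHead, Matrix.vecTail, Matrix.cons_val_two]
      try ring

private lemma colF (M : Matrix (Fin 3) (Fin 3) ℝ) :
    (∑ i, (M * matF) i 0 = 2 * ((∑ i, M i 0) + (∑ i, M i 1) + (∑ i, M i 2))) ∧
    (∑ i, (M * matF) i 1 = (∑ i, M i 0) + (∑ i, M i 1)) ∧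
    (∑ i, (M * matF) i 2 = ∑ i, M i 2) := by
  refine ⟨?_, ?_, ?_⟩ <;>
    · rw [col_sum_mul, Fin.sum_univ_three]
      norm_num [matF, Matrix.vecHead, Matrix.vecTail, Matrix.cons_val_two]
      try ring

private lemma rowE (M : Matrix (Fin 3) (Fin 3) ℝ) :
    (∑ j, (matE * M) 0 j = 2 * (∑ j, M 0 j) + (∑ j, M 2 j)) ∧
    (∑ j, (matE * M) 1 j = 2 * (∑ j, M 0 j) + 2 * (∑ j, M 2 j)) ∧
    (∑ j, (matE * M) 2 j = 2 * (∑ j, M 0 j) + (∑ j, M 2 j)) := by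
  refine ⟨?_, ?_, ?_⟩ <;>
    · rw [row_sum_mul, Fin.sum_univ_three]
      norm_num [matE, Matrix.vecHead, Matrix.vecTail, Matrix.cons_val_two]
      try ring

private lemma rowF (M : Matrix (Fin 3) (Fin 3) ℝ) :
    (∑ j, (matF * M) 0 j = 2 * (∑ j, M 0 j) + (∑ j, M 1 j)) ∧
    (∑ j, (matF * M) 1 j = 2 * (∑ j, M 0 j) + (∑ j, M 1 j)) ∧
    (∑ j, (matF * M) 2 j = 2 * (∑ j, M 0 j) + (∑ j, M 2 j)) := by
  refine ⟨?_, ?_, ?_⟩ <;>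
    · rw [row_sum_mul, Fin.sum_univ_three]
      norm_num [matF, Matrix.vecHead, Matrix.vecTail, Matrix.cons_val_two]
      try ring

private lemma col_inv (l : List (Matrix (Fin 3) (Fin 3) ℝ))
    (hl : ∀ T ∈ l, T = matE ∨ T = matF) :
    (∀ j, 0 ≤ ∑ i, l.prod i j) ∧
      ∑ i, l.prod i 2 ≤ (∑ i, l.prod i 0) + ∑ i, l.prod i 1 := by
  induction l using List.reverseRecOn with
  | nil =>
    constructor
    · intro j; fin_cases j <;> norm_num [Fin.sum_univ_three, Matrix.one_apply]
    · norm_num [Fin.sum_univ_three, Matrix.one_apply]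
  | append_singleton l T ih =>
    have hT : T = matE ∨ T = matF := hl T (by simp)
    obtain ⟨ih1, ih2⟩ := ih (fun S hS => hl S (by simp [hS]))
    rw [List.prod_append, List.prod_singleton]
    have h0 := ih1 0
    have h1 := ih1 1
    have h2 := ih1 2
    rcases hT with rfl | rfl
    · obtain ⟨e0, e1, e2⟩ := colE l.prod
      refine ⟨fun j => ?_, by rw [e0, e1, e2]; linarith⟩
      fin_cases j
      · show (0:ℝ) ≤ ∑ i, (l.prod * matE) i 0; rw [e0]; linarith
      · show (0:ℝ) ≤ ∑ i, (l.prod * matE) i 1; rw [e1]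
      · show (0:ℝ) ≤ ∑ i, (l.prod * matE) i 2; rw [e2]; linarith
    · obtain ⟨e0, e1, e2⟩ := colF l.prod
      refine ⟨fun j => ?_, by rw [e0, e1, e2]; linarith⟩
      fin_cases j
      · show (0:ℝ) ≤ ∑ i, (l.prod * matF) i 0; rw [e0]; linarith
      · show (0:ℝ) ≤ ∑ i, (l.prod * matF) i 1; rw [e1]; linarith
      · show (0:ℝ) ≤ ∑ i, (l.prod * matF) i 2; rw [e2]; linarith

private lemma row_inv (l : List (Matrix (Fin 3) (Fin 3) ℝ))
    (hl : ∀ T ∈ l, T = matE ∨ T = matF) :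
    (∀ i, 0 ≤ ∑ j, l.prod i j) ∧
      (∑ j, l.prod 2 j ≤ ∑ j, l.prod 0 j) ∧ ∑ j, l.prod 2 j ≤ ∑ j, l.prod 1 j := by
  induction l with
  | nil =>
    refine ⟨fun i => ?_, by norm_num [Fin.sum_univ_three, Matrix.one_apply],
      by norm_num [Fin.sum_univ_three, Matrix.one_apply]⟩
    fin_cases i <;> norm_num [Fin.sum_univ_three, Matrix.one_apply]
  | cons T l ih =>
    have hT : T = matE ∨ T = matF := hl T (by simp)
    obtain ⟨ih1, ih2, ih3⟩ := ih (fun S hS => hl S (by simp [hS]))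
    rw [List.prod_cons]
    have h0 := ih1 0
    have h1 := ih1 1
    have h2 := ih1 2
    rcases hT with rfl | rfl
    · obtain ⟨e0, e1, e2⟩ := rowE l.prod
      refine ⟨fun i => ?_, by rw [e0, e2], by rw [e1, e2]; linarith⟩
      fin_cases i
      · show (0:ℝ) ≤ ∑ j, (matE * l.prod) 0 j; rw [e0]; linarith
      · show (0:ℝ) ≤ ∑ j, (matE * l.prod) 1 j; rw [e1]; linarith
      · show (0:ℝ) ≤ ∑ j, (matE * l.prod) 2 j; rw [e2]; linarith
    · obtain ⟨e0, e1, e2⟩ := rowF l.prod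
      refine ⟨fun i => ?_, by rw [e0, e2]; linarith, by rw [e1, e2]; linarith⟩
      fin_cases i
      · show (0:ℝ) ≤ ∑ j, (matF * l.prod) 0 j; rw [e0]; linarith
      · show (0:ℝ) ≤ ∑ j, (matF * l.prod) 1 j; rw [e1]; linarith
      · show (0:ℝ) ≤ ∑ j, (matF * l.prod) 2 j; rw [e2]; linarith

/-- For any matrix `S = [[a,0,0],[a,0,0],[0,0,−b]]` with `a ≥ b ≥ 0` and any
`M₁, M₂ ∈ 𝒫`, the scalar `(1,1,1)·M₁SM₂·(1,1,1)ᵗ` (the sum of all entries of `M₁SM₂`) is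
nonnegative. -/
theorem sum_entries_sandwich_nonneg (a b : ℝ) (hb : 0 ≤ b) (hab : b ≤ a)
    (M₁ M₂ : Matrix (Fin 3) (Fin 3) ℝ) (hM₁ : M₁ ∈ prodSet) (hM₂ : M₂ ∈ prodSet) :
    0 ≤ ∑ i, ∑ j, (M₁ * !![a, 0, 0; a, 0, 0; 0, 0, -b] * M₂) i j := by
  obtain ⟨l₁, hl₁, rfl⟩ := hM₁
  obtain ⟨l₂, hl₂, rfl⟩ := hM₂
  obtain ⟨hc, hc2⟩ := col_inv l₁ hl₁
  obtain ⟨hr, hr0, hr1⟩ := row_inv l₂ hl₂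
  set M₁ := l₁.prod
  set M₂ := l₂.prod
  have key : ∑ i, ∑ j, (M₁ * !![a, 0, 0; a, 0, 0; 0, 0, -b] * M₂) i j =
      a * ((∑ i, M₁ i 0) + ∑ i, M₁ i 1) * (∑ j, M₂ 0 j)
        - b * (∑ i, M₁ i 2) * (∑ j, M₂ 2 j) := by
    simp only [Matrix.mul_apply, Fin.sum_univ_three]
    norm_num [Matrix.vecHead, Matrix.vecTail, Matrix.cons_val_two]
    ring
  rw [key]
  have c0 := hc 0
  have c1 := hc 1
  have c2 := hc 2
  have r0 := hr 0
  have r2 := hr 2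
  have h1 : b * (∑ i, M₁ i 2) * (∑ j, M₂ 2 j)
      ≤ b * ((∑ i, M₁ i 0) + ∑ i, M₁ i 1) * (∑ j, M₂ 2 j) := by
    apply mul_le_mul_of_nonneg_right _ r2
    exact mul_le_mul_of_nonneg_left hc2 hb
  have h2 : b * ((∑ i, M₁ i 0) + ∑ i, M₁ i 1) * (∑ j, M₂ 2 j)
      ≤ b * ((∑ i, M₁ i 0) + ∑ i, M₁ i 1) * (∑ j, M₂ 0 j) := by
    apply mul_le_mul_of_nonneg_left hr0
    exact mul_nonneg hb (by linarith)
  have h3 : b * ((∑ i, M₁ i 0) + ∑ i, M₁ i 1) * (∑ j, M₂ 0 j)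
      ≤ a * ((∑ i, M₁ i 0) + ∑ i, M₁ i 1) * (∑ j, M₂ 0 j) := by
    apply mul_le_mul_of_nonneg_right _ r0
    exact mul_le_mul_of_nonneg_right hab (by linarith)
  linarith
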